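/- Let E be a Dedekind complete vector lattice and let (T_n) be a sequence of orthomorphisms of E such that for every x ∈ E the sequence (T_n x) is order convergent in E. Then the map T : E → E defined by Tx = o-lim T_n x is an orthomorphism of E. -/
import Mathlib


variable (E : Type*) [AddCommGroup E] [ConditionallyCompleteLattice E] [Module ℝ E]
  [CovariantClass E E (· + ·) (· ≤ ·)] [PosSMulMono ℝ E]

/-- The order on order bounded operators: `A ≤ B` iff `A x ≤ B x` for all `x ≥ 0`. -/
def opLE (A B : E →ₗ[ℝ] E) : Prop := ∀ x : E, 0 ≤ x → A x ≤ B x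

/-- An operator is order bounded when it maps order bounded sets to order bounded sets. -/
def IsOrderBoundedOp (T : E →ₗ[ℝ] E) : Prop :=
  ∀ a b : E, ∃ c d : E, ∀ x : E, a ≤ x → x ≤ b → c ≤ T x ∧ T x ≤ d

/-- Band preserving: `T x` lies in the band generated by `x`; equivalently `T x ⊥ y`
whenever `x ⊥ y`. -/
def IsBandPreserving (T : E →ₗ[ℝ] E) : Prop :=
  ∀ x y : E, |x| ⊓ |y| = 0 → |T x| ⊓ |y| = 0

/-- An orthomorphism is an order bounded band preserving linear operator. -/
def IsOrthomorphism (T : E →ₗ[ℝ] E) : Prop :=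
  IsOrderBoundedOp E T ∧ IsBandPreserving E T

/-- Membership in the band generated by a set `S` (in an Archimedean vector lattice this is
the double disjoint complement of `S`). -/
def memBandGen (S : Set E) (w : E) : Prop :=
  ∀ u : E, (∀ s ∈ S, |u| ⊓ |s| = 0) → |u| ⊓ |w| = 0

/-- `P` is the band projection onto the band `B`: it maps into `B` and `x - P x` is
disjoint from `B` for every `x`. -/
def IsBandProjectionOnto (B : Set E) (P : E →ₗ[ℝ] E) : Prop :=
  (∀ x : E, P x ∈ B) ∧ (∀ x : E, ∀ b ∈ B, |x - P x| ⊓ |b| = 0)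

/-- Order convergence of a net: there is a downward directed set `D` with infimum `0`
such that the net is eventually dominated by every member of `D`. -/
def OrderConvNet {ι : Type*} [Preorder ι] (y : ι → E) (l : E) : Prop :=
  ∃ D : Set E, D.Nonempty ∧ DirectedOn (· ≥ ·) D ∧ IsGLB D 0 ∧
    ∀ d ∈ D, ∃ i₀ : ι, ∀ i : ι, i₀ ≤ i → |y i - l| ≤ d

/-- Unbounded order convergence of a net. -/
def UOConvNet {ι : Type*} [Preorder ι] (y : ι → E) (l : E) : Prop :=
  ∀ u : E, 0 ≤ u → OrderConvNet E (fun i => |y i - l| ⊓ u) 0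

/-- Order convergence of a net of operators, in the operator order of the order bounded
operators: there is a downward directed set `D` of operators whose infimum among the
order bounded operators is `0`, eventually dominating `|T i - L|`. -/
def OpOrderConvNet {ι : Type*} [Preorder ι] (T : ι → E →ₗ[ℝ] E) (L : E →ₗ[ℝ] E) : Prop :=
  ∃ D : Set (E →ₗ[ℝ] E), D.Nonempty ∧
    DirectedOn (fun A B => opLE E B A) D ∧
    (∀ d ∈ D, opLE E 0 d) ∧
    (∀ C : E →ₗ[ℝ] E, IsOrderBoundedOp E C → (∀ d ∈ D, opLE E C d) → opLE E C 0) ∧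
    ∀ d ∈ D, ∃ i₀ : ι, ∀ i : ι, i₀ ≤ i → opLE E (L - T i) d ∧ opLE E (T i - L) d


section AuxOrtho
set_option linter.unusedSectionVars false
set_option linter.unusedVariables false
variable {E}

lemma aux_inf_add_le {a b c : E} (ha : 0 ≤ a) (hb : 0 ≤ b) (hc : 0 ≤ c) :
    a ⊓ (b + c) ≤ a ⊓ b + a ⊓ c := by
  have h1 : a ⊓ (b + c) - a ⊓ c = (a ⊓ (b + c) - a) ⊔ (a ⊓ (b + c) - c) := sub_inf ..
  have h2 : a ⊓ (b + c) - a ≤ a ⊓ b := le_trans (sub_nonpos.2 inf_le_left) (le_inf ha hb)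
  have h3 : a ⊓ (b + c) - c ≤ a ⊓ b := by
    refine le_inf ?_ ?_
    · exact le_trans (sub_le_self _ hc) inf_le_left
    · exact sub_le_iff_le_add.2 inf_le_right
  have := h1 ▸ (sup_le h2 h3)
  exact sub_le_iff_le_add.1 this

lemma aux_disj_mono {a b a' b' : E} (h : a ⊓ b = 0) (ha' : 0 ≤ a') (hb' : 0 ≤ b')
    (haa : a' ≤ a) (hbb : b' ≤ b) : a' ⊓ b' = 0 :=
  le_antisymm (le_trans (inf_le_inf haa hbb) h.le) (le_inf ha' hb')

lemma aux_disj_add_left {a b c : E} (ha : 0 ≤ a) (hb : 0 ≤ b) (hc : 0 ≤ c)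
    (h1 : a ⊓ c = 0) (h2 : b ⊓ c = 0) : (a + b) ⊓ c = 0 := by
  refine le_antisymm ?_ (le_inf (add_nonneg ha hb) hc)
  calc (a + b) ⊓ c = c ⊓ (a + b) := inf_comm ..
    _ ≤ c ⊓ a + c ⊓ b := aux_inf_add_le hc ha hb
    _ = 0 := by rw [inf_comm c a, inf_comm c b, h1, h2, add_zero]

lemma aux_disj_nsmul {a b : E} (ha : 0 ≤ a) (hb : 0 ≤ b) (h : a ⊓ b = 0) (n : ℕ) :
    a ⊓ n • b = 0 := by
  induction n with
  | zero => simpa using inf_eq_right.2 ha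
  | succ n ih =>
      have hnb : 0 ≤ n • b := nsmul_nonneg hb n
      have : a ⊓ (n • b + b) ≤ a ⊓ (n • b) + a ⊓ b := aux_inf_add_le ha hnb hb
      rw [ih, h, add_zero] at this
      rw [succ_nsmul]
      exact le_antisymm this (le_inf ha (add_nonneg hnb hb))

lemma aux_add_eq_sup {a b : E} (h : a ⊓ b = 0) : a + b = a ⊔ b := by
  have := inf_add_sup a b
  rw [h, zero_add] at this
  exact this.symm

lemma aux_arch {v d : E} (h : ∀ n : ℕ, n • v ≤ d) : v ≤ 0 := by
  set S : Set E := Set.range (fun n : ℕ => n • v) with hS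
  have hne : S.Nonempty := Set.range_nonempty _
  have hbdd : BddAbove S := ⟨d, by rintro _ ⟨n, rfl⟩; exact h n⟩
  have hub : ∀ n : ℕ, n • v ≤ sSup S - v := by
    intro n
    have : (n + 1) • v ≤ sSup S := le_csSup hbdd ⟨n + 1, rfl⟩
    rw [succ_nsmul] at this
    exact le_sub_iff_add_le.2 this
  have : sSup S ≤ sSup S - v := csSup_le hne (by rintro _ ⟨n, rfl⟩; exact hub n)
  have := le_sub_iff_add_le.1 this
  exact (add_le_iff_nonpos_right _).1 (by rwa [add_comm] at this)

lemma aux_posPart_eq {u v : E} (huv : u ⊓ v = 0) : (u - v)⁺ = u := by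
  have hsup : u ⊔ v = u + v := by
    have := inf_add_sup u v
    rw [huv, zero_add] at this
    exact this
  have : (u - v) ⊔ (v - v) = (u ⊔ v) - v := (sup_sub u v v).symm
  rw [sub_self] at this
  rw [posPart_def, this, hsup, add_sub_cancel_right]

lemma aux_posPart_le_abs (a : E) : a⁺ ≤ |a| := by
  rw [posPart_def]
  exact sup_le (le_abs_self a) (abs_nonneg a)

lemma aux_negPart_le_abs (a : E) : a⁻ ≤ |a| := by
  rw [negPart_def]
  exact sup_le (neg_le_abs a) (abs_nonneg a)

lemma aux_posPart_add {a b : E} (h : |a| ⊓ |b| = 0) : (a + b)⁺ = a⁺ + b⁺ := by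
  have habs : ∀ x : E, x⁺ ≤ |x| := aux_posPart_le_abs
  have hne : ∀ x : E, x⁻ ≤ |x| := aux_negPart_le_abs
  have h1 : a⁺ ⊓ b⁻ = 0 := aux_disj_mono h (posPart_nonneg _) (negPart_nonneg _) (habs a) (hne b)
  have h2 : b⁺ ⊓ a⁻ = 0 := aux_disj_mono (by rwa [inf_comm]) (posPart_nonneg _) (negPart_nonneg _) (habs b) (hne a)
  have h3 : a⁺ ⊓ a⁻ = 0 := posPart_inf_negPart_eq_zero a
  have h4 : b⁺ ⊓ b⁻ = 0 := posPart_inf_negPart_eq_zero b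
  have hdisj : (a⁺ + b⁺) ⊓ (a⁻ + b⁻) = 0 := by
    have c1 : (a⁺ + b⁺) ⊓ a⁻ = 0 := aux_disj_add_left (posPart_nonneg _) (posPart_nonneg _) (negPart_nonneg _) h3 h2
    have c2 : (a⁺ + b⁺) ⊓ b⁻ = 0 := aux_disj_add_left (posPart_nonneg _) (posPart_nonneg _) (negPart_nonneg _) h1 h4
    have := aux_disj_add_left (negPart_nonneg a) (negPart_nonneg b) (add_nonneg (posPart_nonneg a) (posPart_nonneg b))
      (by rwa [inf_comm] at c1) (by rwa [inf_comm] at c2)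
    rwa [inf_comm]
  have heq : a + b = (a⁺ + b⁺) - (a⁻ + b⁻) := by
    calc a + b = (a⁺ - a⁻) + (b⁺ - b⁻) := by rw [posPart_sub_negPart, posPart_sub_negPart]
      _ = (a⁺ + b⁺) - (a⁻ + b⁻) := by abel
  rw [heq, aux_posPart_eq hdisj]

noncomputable def Pj (u z : E) : E := sSup (Set.range fun m : ℕ => z ⊓ m • u)

lemma Pj_bddAbove (u z : E) : BddAbove (Set.range fun m : ℕ => z ⊓ m • u) :=
  ⟨z, by rintro _ ⟨m, rfl⟩; exact inf_le_left⟩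

lemma Pj_le (u z : E) : Pj u z ≤ z :=
  csSup_le (Set.range_nonempty _) (by rintro _ ⟨m, rfl⟩; exact inf_le_left)

lemma Pj_mem_le {u z : E} (m : ℕ) : z ⊓ m • u ≤ Pj u z :=
  le_csSup (Pj_bddAbove u z) ⟨m, rfl⟩

lemma Pj_nonneg {u z : E} (hz : 0 ≤ z) : 0 ≤ Pj u z := by
  have : z ⊓ (0 : ℕ) • u ≤ Pj u z := Pj_mem_le 0
  simpa [inf_eq_right.2 hz] using this

lemma Pj_mono_z {u z z' : E} (h : z ≤ z') : Pj u z ≤ Pj u z' :=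
  csSup_le (Set.range_nonempty _)
    (by rintro _ ⟨m, rfl⟩; exact le_trans (inf_le_inf_right _ h) (Pj_mem_le m))

lemma Pj_mono_u {u u' z : E} (h : u ≤ u') : Pj u z ≤ Pj u' z :=
  csSup_le (Set.range_nonempty _)
    (by rintro _ ⟨m, rfl⟩;
        exact le_trans (inf_le_inf_left _ (nsmul_le_nsmul_right h m)) (Pj_mem_le m))

lemma Pj_self {u : E} (hu : 0 ≤ u) : Pj u u = u := by
  refine le_antisymm (Pj_le u u) ?_
  have : u ⊓ (1 : ℕ) • u ≤ Pj u u := Pj_mem_le 1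
  simpa using this

lemma Pj_eq_zero_of_disj {u z : E} (hu : 0 ≤ u) (hz : 0 ≤ z) (h : z ⊓ u = 0) :
    Pj u z = 0 := by
  refine le_antisymm ?_ (Pj_nonneg hz)
  refine csSup_le (Set.range_nonempty _) ?_
  rintro _ ⟨m, rfl⟩
  exact (aux_disj_nsmul hz hu h m).le

lemma Pj_add {u a b : E} (hu : 0 ≤ u) (ha : 0 ≤ a) (hb : 0 ≤ b) :
    Pj u (a + b) = Pj u a + Pj u b := by
  refine le_antisymm ?_ ?_
  · refine csSup_le (Set.range_nonempty _) ?_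
    rintro _ ⟨m, rfl⟩
    have hmu : 0 ≤ m • u := nsmul_nonneg hu m
    calc (a + b) ⊓ m • u = m • u ⊓ (a + b) := inf_comm ..
      _ ≤ m • u ⊓ a + m • u ⊓ b := aux_inf_add_le hmu ha hb
      _ = a ⊓ m • u + b ⊓ m • u := by rw [inf_comm (m • u) a, inf_comm (m • u) b]
      _ ≤ Pj u a + Pj u b := add_le_add (Pj_mem_le m) (Pj_mem_le m)
  · have key : ∀ m m' : ℕ, a ⊓ m • u + b ⊓ m' • u ≤ Pj u (a + b) := by
      intro m m'
      refine le_trans (le_trans ?_ (le_of_eq rfl)) (Pj_mem_le (u := u) (z := a + b) (m + m'))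
      refine le_inf (add_le_add inf_le_left inf_le_left) ?_
      rw [add_nsmul]
      exact add_le_add inf_le_right inf_le_right
    have step1 : ∀ m' : ℕ, Pj u a + b ⊓ m' • u ≤ Pj u (a + b) := by
      intro m'
      have : Pj u a ≤ Pj u (a + b) - b ⊓ m' • u :=
        csSup_le (Set.range_nonempty _)
          (by rintro _ ⟨m, rfl⟩; exact le_sub_iff_add_le.2 (key m m'))
      exact le_sub_iff_add_le.1 this
    have step2 : Pj u b ≤ Pj u (a + b) - Pj u a :=
      csSup_le (Set.range_nonempty _)
        (by rintro _ ⟨m', rfl⟩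
            have := step1 m'
            exact le_sub_iff_add_le.2 (by rwa [add_comm] at this))
    have := le_sub_iff_add_le.1 step2
    rwa [add_comm] at this

lemma Pj_nsmul {u a : E} (hu : 0 ≤ u) (ha : 0 ≤ a) (k : ℕ) :
    Pj u (k • a) = k • Pj u a := by
  induction k with
  | zero => simpa using Pj_eq_zero_of_disj hu le_rfl (inf_eq_left.2 hu)
  | succ k ih =>
      rw [succ_nsmul, succ_nsmul, Pj_add hu (nsmul_nonneg ha k) ha, ih]

lemma Pj_disj {u z w : E} (hu : 0 ≤ u) (hz : 0 ≤ z) (hw : 0 ≤ w) (h : w ⊓ u = 0) :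
    w ⊓ Pj u z = 0 := by
  set q := w ⊓ Pj u z with hq
  have hq0 : 0 ≤ q := le_inf hw (Pj_nonneg hz)
  have hqu : q ⊓ u = 0 := aux_disj_mono h hq0 hu inf_le_left le_rfl
  have key : ∀ m : ℕ, z ⊓ m • u ≤ Pj u z - q := by
    intro m
    have hdisj : q ⊓ (z ⊓ m • u) = 0 :=
      aux_disj_mono (aux_disj_nsmul hq0 hu hqu m) hq0 (le_inf hz (nsmul_nonneg hu m))
        le_rfl inf_le_right
    have hsum : q + z ⊓ m • u = q ⊔ (z ⊓ m • u) := aux_add_eq_sup hdisj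
    have hle : q ⊔ (z ⊓ m • u) ≤ Pj u z := sup_le inf_le_right (Pj_mem_le m)
    have h5 : q + z ⊓ m • u ≤ Pj u z := hsum ▸ hle
    exact le_sub_iff_add_le.2 (by rwa [add_comm] at h5)
  have h6 : Pj u z ≤ Pj u z - q := csSup_le (Set.range_nonempty _) (by rintro _ ⟨m, rfl⟩; exact key m)
  have h7 := le_sub_iff_add_le.1 h6
  exact le_antisymm ((add_le_iff_nonpos_right _).1 h7) hq0

lemma Pj_rest_disj {u z : E} (hu : 0 ≤ u) (hz : 0 ≤ z) : (z - Pj u z) ⊓ u = 0 := by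
  set t := (z - Pj u z) ⊓ u with ht
  have ht0 : 0 ≤ t := le_inf (sub_nonneg.2 (Pj_le u z)) hu
  have key : ∀ m : ℕ, z ⊓ m • u ≤ Pj u z - t := by
    intro m
    have h1 : z ⊓ m • u + t ≤ z ⊓ (m + 1) • u := by
      refine le_inf ?_ ?_
      · have h3 : z ⊓ m • u + t ≤ Pj u z + (z - Pj u z) := add_le_add (Pj_mem_le m) inf_le_left
        have h4 : Pj u z + (z - Pj u z) = z := by abel
        rwa [h4] at h3
      · rw [succ_nsmul]
        exact add_le_add inf_le_right inf_le_right
    have h5 := le_trans h1 (Pj_mem_le (m + 1))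
    exact le_sub_iff_add_le.2 h5
  have h6 : Pj u z ≤ Pj u z - t := csSup_le (Set.range_nonempty _) (by rintro _ ⟨m, rfl⟩; exact key m)
  have h7 := le_sub_iff_add_le.1 h6
  exact le_antisymm ((add_le_iff_nonpos_right _).1 h7) ht0

open Finset in
lemma aux_sum_nonneg {f : ℕ → E} (m : ℕ) (hf : ∀ k, k < m → 0 ≤ f k) :
    0 ≤ ∑ k ∈ range m, f k := by
  induction m with
  | zero => simp
  | succ m ih =>
      rw [Finset.sum_range_succ]
      exact add_nonneg (ih fun k hk => hf k (hk.trans (Nat.lt_succ_self m)))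
        (hf m (Nat.lt_succ_self m))

open Finset in
lemma aux_sum_le_sum {f g : ℕ → E} (m : ℕ) (h : ∀ k, k < m → f k ≤ g k) :
    ∑ k ∈ range m, f k ≤ ∑ k ∈ range m, g k := by
  induction m with
  | zero => simp
  | succ m ih =>
      rw [Finset.sum_range_succ, Finset.sum_range_succ]
      exact add_le_add (ih fun k hk => h k (hk.trans (Nat.lt_succ_self m)))
        (h m (Nat.lt_succ_self m))

open Finset in
lemma aux_disj_sum {f : ℕ → E} {g : E} (m : ℕ) (hf : ∀ k, k < m → 0 ≤ f k) (hg : 0 ≤ g)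
    (hd : ∀ k, k < m → f k ⊓ g = 0) : (∑ k ∈ range m, f k) ⊓ g = 0 := by
  induction m with
  | zero => simpa using inf_eq_left.2 hg
  | succ m ih =>
      rw [Finset.sum_range_succ]
      exact aux_disj_add_left
        (aux_sum_nonneg m fun k hk => hf k (hk.trans (Nat.lt_succ_self m)))
        (hf m (Nat.lt_succ_self m)) hg
        (ih (fun k hk => hf k (hk.trans (Nat.lt_succ_self m)))
            (fun k hk => hd k (hk.trans (Nat.lt_succ_self m))))
        (hd m (Nat.lt_succ_self m))

open Finset in
lemma aux_abs_sum_le {f : ℕ → E} (m : ℕ) : |∑ k ∈ range m, f k| ≤ ∑ k ∈ range m, |f k| := by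
  induction m with
  | zero => simp
  | succ m ih =>
      rw [Finset.sum_range_succ, Finset.sum_range_succ]
      exact le_trans (abs_add_le _ _) (add_le_add ih le_rfl)

open Finset in
lemma aux_posPart_sum {f : ℕ → E} (m : ℕ)
    (hd : ∀ j k, j < m → k < m → j ≠ k → |f j| ⊓ |f k| = 0) :
    (∑ k ∈ range m, f k)⁺ = ∑ k ∈ range m, (f k)⁺ := by
  induction m with
  | zero => simp
  | succ m ih =>
      rw [Finset.sum_range_succ, Finset.sum_range_succ,
        ← ih (fun j k hj hk => hd j k (hj.trans (Nat.lt_succ_self m)) (hk.trans (Nat.lt_succ_self m)))]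
      refine aux_posPart_add ?_
      have h1 : |∑ k ∈ range m, f k| ⊓ |f m| ≤ (∑ k ∈ range m, |f k|) ⊓ |f m| :=
        inf_le_inf_right _ (aux_abs_sum_le m)
      have h2 : (∑ k ∈ range m, |f k|) ⊓ |f m| = 0 :=
        aux_disj_sum m (fun k _ => abs_nonneg _) (abs_nonneg _)
          (fun k hk => hd k m (hk.trans (Nat.lt_succ_self m)) (Nat.lt_succ_self m) (Nat.ne_of_lt hk))
      exact le_antisymm (h2 ▸ h1) (le_inf (abs_nonneg _) (abs_nonneg _))

open Finset in
lemma aux_sum_le_of_disj {f : ℕ → E} {y : E} (hy : 0 ≤ y) (m : ℕ) (hf : ∀ k, k < m → 0 ≤ f k)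
    (hfy : ∀ k, k < m → f k ≤ y)
    (hd : ∀ j k, j < m → k < m → j ≠ k → f j ⊓ f k = 0) :
    ∑ k ∈ range m, f k ≤ y := by
  induction m with
  | zero => simpa using hy
  | succ m ih =>
      rw [Finset.sum_range_succ]
      have hS : ∑ k ∈ range m, f k ≤ y :=
        ih (fun k hk => hf k (hk.trans (Nat.lt_succ_self m)))
          (fun k hk => hfy k (hk.trans (Nat.lt_succ_self m)))
          (fun j k hj hk => hd j k (hj.trans (Nat.lt_succ_self m)) (hk.trans (Nat.lt_succ_self m)))
      have hdisj : (∑ k ∈ range m, f k) ⊓ f m = 0 :=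
        aux_disj_sum m (fun k hk => hf k (hk.trans (Nat.lt_succ_self m))) (hf m (Nat.lt_succ_self m))
          (fun k hk => hd k m (hk.trans (Nat.lt_succ_self m)) (Nat.lt_succ_self m) (Nat.ne_of_lt hk))
      rw [aux_add_eq_sup hdisj]
      exact sup_le hS (hfy m (Nat.lt_succ_self m))

open Finset in
lemma aux_single_le_sum {f : ℕ → E} (m : ℕ) (hf : ∀ k, k < m → 0 ≤ f k) {k : ℕ} (hk : k < m) :
    f k ≤ ∑ j ∈ range m, f j := by
  induction m with
  | zero => omega
  | succ m ih =>
      rw [Finset.sum_range_succ]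
      rcases Nat.lt_or_ge k m with h | h
      · exact le_trans (ih (fun j hj => hf j (hj.trans (Nat.lt_succ_self m))) h)
          (le_add_of_nonneg_right (hf m (Nat.lt_succ_self m)))
      · have : k = m := by omega
        subst this
        exact le_add_of_nonneg_left (aux_sum_nonneg k fun j hj => hf j (hj.trans (Nat.lt_succ_self k)))

lemma aux_abs_eq_zero {a : E} (h : |a| ≤ 0) : a = 0 := by
  have h1 : a ≤ 0 := le_trans (le_abs_self a) h
  have h2 : -a ≤ 0 := le_trans (neg_le_abs a) h
  exact le_antisymm h1 (by simpa using h2)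

open Finset in
lemma aux_star {T : E →ₗ[ℝ] E} (hob : IsOrderBoundedOp E T) (hbp : IsBandPreserving E T)
    {x y : E} (hy : 0 ≤ y) (hyx : y ≤ x) : T y ≤ (T x)⁺ := by
  have hx : 0 ≤ x := le_trans hy hyx
  obtain ⟨c0, d0, hcd⟩ := hob 0 x
  have hd0 : (0 : E) ≤ d0 := by
    have := (hcd 0 le_rfl hx).2
    rwa [map_zero] at this
  have hbp' : ∀ a b : E, 0 ≤ a → 0 ≤ b → a ⊓ b = 0 → |T a| ⊓ |T b| = 0 := by
    intro a b ha hb hab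
    have h1 : |T a| ⊓ |b| = 0 := hbp a b (by rwa [abs_of_nonneg ha, abs_of_nonneg hb])
    have h1' : |T a| ⊓ b = 0 := by rwa [abs_of_nonneg hb] at h1
    have h2 : |T b| ⊓ |(|T a|)| = 0 := by
      refine hbp b (|T a|) ?_
      rw [abs_of_nonneg hb, abs_abs, inf_comm]
      exact h1' 
    rw [abs_abs] at h2
    rw [inf_comm]
    exact h2
  have key : ∀ n : ℕ, n • (T y - (T x)⁺) ≤ d0 := by
    intro n
    rcases Nat.eq_zero_or_pos n with hn | hn
    · simpa [hn] using hd0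
    set u : ℕ → E := fun k => (n • y - k • x)⁺ with hu_def
    set p : ℕ → E := fun k => Pj (u k) x with hp_def
    set e : ℕ → E := fun k => p k - p (k + 1) with he_def
    set w : ℕ → E := fun k => Pj (e k) y with hw_def
    have hu_nonneg : ∀ k, 0 ≤ u k := fun k => posPart_nonneg _
    have hu_anti : ∀ j k, j ≤ k → u k ≤ u j := fun j k hjk =>
      posPart_mono (sub_le_sub_left (nsmul_le_nsmul_left hx hjk) _)
    have hu0 : u 0 = n • y := by
      simp only [hu_def, zero_nsmul, sub_zero]
      exact posPart_eq_self.2 (nsmul_nonneg hy n)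
    have hun : u n = 0 := posPart_eq_zero.2 (sub_nonpos.2 (nsmul_le_nsmul_right hyx n))
    have hp_nonneg : ∀ k, 0 ≤ p k := fun k => Pj_nonneg hx
    have hp_le : ∀ k, p k ≤ x := fun k => Pj_le _ _
    have hp_anti : ∀ k, p (k + 1) ≤ p k := fun k => Pj_mono_u (hu_anti k (k + 1) (Nat.le_succ k))
    have hpn : p n = 0 := by
      have : p n = Pj (u n) x := rfl
      rw [this, hun]
      exact Pj_eq_zero_of_disj le_rfl hx (by simpa using inf_eq_right.2 hx)
    have he_nonneg : ∀ k, 0 ≤ e k := fun k => sub_nonneg.2 (hp_anti k)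
    have he_le_p : ∀ k, e k ≤ p k := fun k => sub_le_self _ (hp_nonneg (k + 1))
    have he_le_x : ∀ k, e k ≤ x := fun k => le_trans (he_le_p k) (hp_le k)
    have hsum_e : ∑ k ∈ range n, e k = p 0 := by
      have := Finset.sum_range_sub' p n
      simp only [he_def]
      rw [this, hpn, sub_zero]
    have hrest : ∀ k, (x - p k) ⊓ u k = 0 := fun k => Pj_rest_disj (hu_nonneg k) hx
    have he_disj_usucc : ∀ k, e k ⊓ u (k + 1) = 0 := by
      intro k
      refine aux_disj_mono (hrest (k + 1)) (he_nonneg k) (hu_nonneg (k + 1)) ?_ le_rfl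
      exact sub_le_sub_right (hp_le k) _
    have hpx_disj : ∀ k, (x - p k) ⊓ p k = 0 := fun k =>
      Pj_disj (hu_nonneg k) hx (sub_nonneg.2 (hp_le k)) (hrest k)
    have he_disj_px : ∀ k, (x - e k) ⊓ e k = 0 := by
      intro k
      have h1 : (x - p k) ⊓ e k = 0 :=
        aux_disj_mono (hpx_disj k) (sub_nonneg.2 (hp_le k)) (he_nonneg k) le_rfl (he_le_p k)
      have h2 : p (k + 1) ⊓ e k = 0 := by
        have h3 : e k ⊓ p (k + 1) = 0 :=
          Pj_disj (hu_nonneg (k + 1)) hx (he_nonneg k) (he_disj_usucc k)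
        rwa [inf_comm] at h3
      have h3 : ((x - p k) + p (k + 1)) ⊓ e k = 0 :=
        aux_disj_add_left (sub_nonneg.2 (hp_le k)) (hp_nonneg (k + 1)) (he_nonneg k) h1 h2
      have h4 : x - e k = (x - p k) + p (k + 1) := by simp only [he_def]; abel
      rwa [h4]
    have hQx : ∀ k, Pj (e k) x = e k := by
      intro k
      refine le_antisymm ?_ ?_
      · have hx_split : x = e k + (x - e k) := by abel
        have hcalc : Pj (e k) x = e k := by
          calc Pj (e k) x = Pj (e k) (e k + (x - e k)) := by rw [← hx_split]
            _ = Pj (e k) (e k) + Pj (e k) (x - e k) :=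
                Pj_add (he_nonneg k) (he_nonneg k) (sub_nonneg.2 (he_le_x k))
            _ = e k + 0 := by
                rw [Pj_self (he_nonneg k),
                  Pj_eq_zero_of_disj (he_nonneg k) (sub_nonneg.2 (he_le_x k)) (he_disj_px k)]
            _ = e k := add_zero _
        exact hcalc.le
      · have h5 : x ⊓ (1 : ℕ) • e k ≤ Pj (e k) x := Pj_mem_le 1
        rw [one_nsmul, inf_eq_right.2 (he_le_x k)] at h5
        exact h5
    have hw_nonneg : ∀ k, 0 ≤ w k := fun k => Pj_nonneg hy
    have hw_le_y : ∀ k, w k ≤ y := fun k => Pj_le _ _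
    have he_pair : ∀ j k, j < k → e j ⊓ e k = 0 := by
      intro j k hjk
      have h1 : e j ⊓ u k = 0 :=
        aux_disj_mono (he_disj_usucc j) (he_nonneg j) (hu_nonneg k) le_rfl (hu_anti (j + 1) k hjk)
      have h2 : e j ⊓ p k = 0 := Pj_disj (hu_nonneg k) hx (he_nonneg j) h1
      exact aux_disj_mono h2 (he_nonneg j) (he_nonneg k) le_rfl (he_le_p k)
    have he_pair' : ∀ j k, j ≠ k → e j ⊓ e k = 0 := by
      intro j k hjk
      rcases lt_or_gt_of_ne hjk with h | h
      · exact he_pair j k h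
      · rw [inf_comm]; exact he_pair k j h
    have hw_pair : ∀ j k, j ≠ k → w j ⊓ w k = 0 := by
      intro j k hjk
      have h1 : e j ⊓ w k = 0 := Pj_disj (he_nonneg k) hy (he_nonneg j) (he_pair' j k hjk)
      have h2 : w k ⊓ w j = 0 :=
        Pj_disj (he_nonneg j) hy (hw_nonneg k) (by rwa [inf_comm] at h1)
      rwa [inf_comm] at h2
    have hQ_lower : ∀ k, k • e k ≤ n • w k := by
      intro k
      have hkx : k • x ≤ n • y + (k • x - n • y)⁺ :=
        sub_le_iff_le_add'.1 (le_posPart _)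
      have hupos : (0 : E) ≤ (k • x - n • y)⁺ := posPart_nonneg _
      have hdisj : (k • x - n • y)⁺ ⊓ e k = 0 := by
        have h1 : u k ⊓ (k • x - n • y)⁺ = 0 := by
          have h2 : (k • x - n • y)⁺ = (n • y - k • x)⁻ := by
            rw [← posPart_neg, neg_sub]
          rw [h2]
          exact posPart_inf_negPart_eq_zero _
        have h3 : (k • x - n • y)⁺ ⊓ p k = 0 :=
          Pj_disj (hu_nonneg k) hx hupos (by rwa [inf_comm] at h1)
        exact aux_disj_mono h3 hupos (he_nonneg k) le_rfl (he_le_p k)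
      calc k • e k = k • Pj (e k) x := by rw [hQx k]
        _ = Pj (e k) (k • x) := (Pj_nsmul (he_nonneg k) hx k).symm
        _ ≤ Pj (e k) (n • y + (k • x - n • y)⁺) := Pj_mono_z hkx
        _ = Pj (e k) (n • y) + Pj (e k) ((k • x - n • y)⁺) :=
            Pj_add (he_nonneg k) (nsmul_nonneg hy n) hupos
        _ = n • w k + 0 := by
            rw [Pj_nsmul (he_nonneg k) hy n, Pj_eq_zero_of_disj (he_nonneg k) hupos hdisj]
        _ = n • w k := add_zero _
    have hQ_upper : ∀ k, n • w k ≤ (k + 1) • e k := by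
      intro k
      have hny : n • y ≤ (k + 1) • x + u (k + 1) := sub_le_iff_le_add'.1 (le_posPart _)
      have hdisj : u (k + 1) ⊓ e k = 0 := by rw [inf_comm]; exact he_disj_usucc k
      calc n • w k = Pj (e k) (n • y) := (Pj_nsmul (he_nonneg k) hy n).symm
        _ ≤ Pj (e k) ((k + 1) • x + u (k + 1)) := Pj_mono_z hny
        _ = Pj (e k) ((k + 1) • x) + Pj (e k) (u (k + 1)) :=
            Pj_add (he_nonneg k) (nsmul_nonneg hx (k + 1)) (hu_nonneg (k + 1))
        _ = (k + 1) • e k + 0 := by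
            rw [Pj_nsmul (he_nonneg k) hx (k + 1), hQx k,
              Pj_eq_zero_of_disj (he_nonneg k) (hu_nonneg (k + 1)) hdisj]
        _ = (k + 1) • e k := add_zero _
    have hsum_w : ∑ k ∈ range n, w k = y := by
      set r := y - ∑ k ∈ range n, w k with hr
      have hsum_le : ∑ k ∈ range n, w k ≤ y :=
        aux_sum_le_of_disj hy n (fun k _ => hw_nonneg k) (fun k _ => hw_le_y k)
          (fun j k _ _ h => hw_pair j k h)
      have hr0 : 0 ≤ r := sub_nonneg.2 hsum_le
      have hr_le_y : r ≤ y := sub_le_self _ (aux_sum_nonneg n fun k _ => hw_nonneg k)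
      have hr_disj_e : ∀ k, k < n → r ⊓ e k = 0 := by
        intro k hk
        have h1 : r ≤ y - w k := by
          have h2 : w k ≤ ∑ j ∈ range n, w j :=
            aux_single_le_sum n (fun j _ => hw_nonneg j) hk
          exact sub_le_sub_left h2 y
        have h3 : (y - w k) ⊓ e k = 0 := Pj_rest_disj (he_nonneg k) hy
        exact aux_disj_mono h3 hr0 (he_nonneg k) h1 le_rfl
      have hr_p0 : r ⊓ p 0 = 0 := by
        rw [← hsum_e, inf_comm]
        exact aux_disj_sum n (fun k _ => he_nonneg k) hr0
          (fun k hk => by rw [inf_comm]; exact hr_disj_e k hk)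
      have hr_rest : r ⊓ (x - p 0) = 0 := by
        have h1 : (x - p 0) ⊓ u 0 = 0 := hrest 0
        rw [hu0] at h1
        have h2 : r ≤ n • y := by
          refine le_trans hr_le_y ?_
          calc y = (1 : ℕ) • y := (one_nsmul y).symm
            _ ≤ n • y := nsmul_le_nsmul_left hy hn
        exact aux_disj_mono (by rwa [inf_comm] at h1) hr0 (sub_nonneg.2 (hp_le 0)) h2 le_rfl
      have hxsplit : x = p 0 + (x - p 0) := by abel
      have h6 : r ⊓ x ≤ r ⊓ p 0 + r ⊓ (x - p 0) := by
        calc r ⊓ x = r ⊓ (p 0 + (x - p 0)) := by rw [← hxsplit]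
          _ ≤ r ⊓ p 0 + r ⊓ (x - p 0) :=
              aux_inf_add_le hr0 (hp_nonneg 0) (sub_nonneg.2 (hp_le 0))
      rw [hr_p0, hr_rest, add_zero] at h6
      have h7 : r ⊓ x = r := inf_eq_left.2 (le_trans hr_le_y hyx)
      rw [h7] at h6
      have h8 : r = 0 := le_antisymm h6 hr0
      have := sub_eq_zero.1 h8
      exact this.symm
    set s : ℕ → E := fun k => n • w k - k • e k with hs_def
    have hs_nonneg : ∀ k, 0 ≤ s k := fun k => sub_nonneg.2 (hQ_lower k)
    have hs_le : ∀ k, s k ≤ e k := by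
      intro k
      have h1 := hQ_upper k
      rw [succ_nsmul] at h1
      exact sub_le_iff_le_add'.2 h1
    have hny_split : n • y = ∑ k ∈ range n, (k • e k + s k) := by
      rw [← hsum_w, Finset.smul_sum]
      refine Finset.sum_congr rfl ?_
      intro k _
      simp only [hs_def]
      abel
    have hT_eq : n • T y = ∑ k ∈ range n, k • T (e k) + T (∑ k ∈ range n, s k) := by
      have h1 : T (n • y) = T (∑ k ∈ range n, k • e k + ∑ k ∈ range n, s k) := by
        rw [← Finset.sum_add_distrib, ← hny_split]
      rw [map_nsmul] at h1
      rw [h1, map_add, map_sum]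
      congr 1
      refine Finset.sum_congr rfl ?_
      intro k _
      rw [map_nsmul]
    have hTs : T (∑ k ∈ range n, s k) ≤ d0 := by
      have h1 : (0 : E) ≤ ∑ k ∈ range n, s k := aux_sum_nonneg n fun k _ => hs_nonneg k
      have h2 : ∑ k ∈ range n, s k ≤ x := by
        calc ∑ k ∈ range n, s k ≤ ∑ k ∈ range n, e k :=
              aux_sum_le_sum n fun k _ => hs_le k
          _ = p 0 := hsum_e
          _ ≤ x := hp_le 0
      exact (hcd _ h1 h2).2
    have hTe_disj : ∀ j k, j ≠ k → |T (e j)| ⊓ |T (e k)| = 0 := fun j k hjk =>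
      hbp' (e j) (e k) (he_nonneg j) (he_nonneg k) (he_pair' j k hjk)
    have hTp0_le : (T (p 0))⁺ ≤ (T x)⁺ := by
      have h1 : p 0 ⊓ (x - p 0) = 0 := by rw [inf_comm]; exact hpx_disj 0
      have h2 : |T (p 0)| ⊓ |T (x - p 0)| = 0 :=
        hbp' _ _ (hp_nonneg 0) (sub_nonneg.2 (hp_le 0)) h1
      have h3 : T x = T (p 0) + T (x - p 0) := by
        rw [← map_add]
        congr 1
        abel
      rw [h3, aux_posPart_add h2]
      exact le_add_of_nonneg_right (posPart_nonneg _)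
    have hsum_bound : ∑ k ∈ range n, k • T (e k) ≤ n • (T x)⁺ := by
      have h1 : ∀ k, k < n → k • T (e k) ≤ n • (T (e k))⁺ := by
        intro k hk
        calc k • T (e k) ≤ k • (T (e k))⁺ := nsmul_le_nsmul_right (le_posPart _) k
          _ ≤ n • (T (e k))⁺ := nsmul_le_nsmul_left (posPart_nonneg _) hk.le
      calc ∑ k ∈ range n, k • T (e k) ≤ ∑ k ∈ range n, n • (T (e k))⁺ :=
            aux_sum_le_sum n h1
        _ = n • ∑ k ∈ range n, (T (e k))⁺ := (Finset.smul_sum).symm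
        _ = n • (∑ k ∈ range n, T (e k))⁺ := by
            rw [aux_posPart_sum n fun j k hj hk hjk => hTe_disj j k hjk]
        _ = n • (T (p 0))⁺ := by rw [← map_sum, hsum_e]
        _ ≤ n • (T x)⁺ := nsmul_le_nsmul_right hTp0_le n
    have hfinal : n • T y ≤ n • (T x)⁺ + d0 := by
      rw [hT_eq]
      exact add_le_add hsum_bound hTs
    rw [nsmul_sub]
    exact sub_le_iff_le_add.2 (by rwa [add_comm (n • (T x)⁺) d0] at hfinal)
  have := aux_arch key
  exact sub_nonpos.1 this

lemma aux_absStar {T : E →ₗ[ℝ] E} (hob : IsOrderBoundedOp E T) (hbp : IsBandPreserving E T)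
    {y e : E} (h : |y| ≤ e) : |T y| ≤ |T e| + |T e| := by
  have hypos : (0 : E) ≤ y⁺ := posPart_nonneg _
  have hyneg : (0 : E) ≤ y⁻ := negPart_nonneg _
  have h1 : y⁺ ≤ e := le_trans (aux_posPart_le_abs y) h
  have h2 : y⁻ ≤ e := le_trans (aux_negPart_le_abs y) h
  have hobn : IsOrderBoundedOp E (-T) := by
    intro a b
    obtain ⟨c, d, hcd⟩ := hob a b
    refine ⟨-d, -c, fun z hz1 hz2 => ⟨?_, ?_⟩⟩
    · rw [LinearMap.neg_apply]
      simpa using sub_le_sub_left (hcd z hz1 hz2).2 0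
    · rw [LinearMap.neg_apply]
      simpa using sub_le_sub_left (hcd z hz1 hz2).1 0
  have hbpn : IsBandPreserving E (-T) := by
    intro a b hab
    simpa [abs_neg] using hbp a b hab
  have s1 : T y⁺ ≤ (T e)⁺ := aux_star hob hbp hypos h1
  have s2 : T y⁻ ≤ (T e)⁺ := aux_star hob hbp hyneg h2
  have s3 : (-T) y⁺ ≤ ((-T) e)⁺ := aux_star hobn hbpn hypos h1
  have s4 : (-T) y⁻ ≤ ((-T) e)⁺ := aux_star hobn hbpn hyneg h2
  have hne : ((-T) e)⁺ = (T e)⁻ := by rw [LinearMap.neg_apply, posPart_neg]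
  rw [hne, LinearMap.neg_apply] at s3 s4
  have habs1 : (T e)⁺ ≤ |T e| := aux_posPart_le_abs _
  have habs2 : (T e)⁻ ≤ |T e| := aux_negPart_le_abs _
  have hTy : T y = T y⁺ - T y⁻ := by rw [← map_sub, posPart_sub_negPart]
  refine abs_le'.2 ⟨?_, ?_⟩
  · rw [hTy]
    have h5 : T y⁺ - T y⁻ ≤ (T e)⁺ + (T e)⁻ := by
      have h6 := add_le_add s1 s4
      simpa [sub_eq_add_neg] using h6
    exact le_trans h5 (add_le_add habs1 habs2)
  · rw [hTy, neg_sub]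
    have h5 : T y⁻ - T y⁺ ≤ (T e)⁺ + (T e)⁻ := by
      have h6 := add_le_add s2 s3
      have h7 : T y⁻ + -(T y⁺) ≤ (T e)⁺ + (T e)⁻ := h6
      simpa [sub_eq_add_neg] using h7
    exact le_trans h5 (add_le_add habs1 habs2)

lemma aux_lim_unique {y : ℕ → E} {l l' : E} (h : OrderConvNet E y l)
    (h' : OrderConvNet E y l') : l = l' := by
  obtain ⟨D, hne, hdir, hglb, hev⟩ := h
  obtain ⟨D', hne', hdir', hglb', hev'⟩ := h'
  have key : ∀ d' ∈ D', |l - l'| - d' ≤ 0 := by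
    intro d' hd'
    refine hglb.2 ?_
    intro d hd
    obtain ⟨i₀, hi₀⟩ := hev d hd
    obtain ⟨i₁, hi₁⟩ := hev' d' hd'
    have e1 : |y (max i₀ i₁) - l| ≤ d := hi₀ _ (le_max_left _ _)
    have e2 : |y (max i₀ i₁) - l'| ≤ d' := hi₁ _ (le_max_right _ _)
    have h3 : |l - l'| ≤ d + d' := by
      have h4 : l - l' = (y (max i₀ i₁) - l') + -(y (max i₀ i₁) - l) := by abel
      calc |l - l'| = |(y (max i₀ i₁) - l') + -(y (max i₀ i₁) - l)| := by rw [← h4]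
        _ ≤ |y (max i₀ i₁) - l'| + |-(y (max i₀ i₁) - l)| := abs_add_le _ _
        _ = |y (max i₀ i₁) - l'| + |y (max i₀ i₁) - l| := by rw [abs_neg]
        _ ≤ d' + d := add_le_add e2 e1
        _ = d + d' := add_comm _ _
    exact sub_le_iff_le_add.2 h3
  have key2 : |l - l'| ≤ 0 := by
    refine hglb'.2 ?_
    intro d' hd'
    exact sub_nonpos.1 (key d' hd')
  exact sub_eq_zero.1 (aux_abs_eq_zero key2)

lemma aux_conv_add {y y' : ℕ → E} {l l' : E} (h : OrderConvNet E y l)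
    (h' : OrderConvNet E y' l') : OrderConvNet E (fun n => y n + y' n) (l + l') := by
  obtain ⟨D, hne, hdir, hglb, hev⟩ := h
  obtain ⟨D', hne', hdir', hglb', hev'⟩ := h'
  refine ⟨Set.image2 (· + ·) D D', hne.image2 hne', ?_, ?_, ?_⟩
  · rintro _ ⟨d1, hd1, d1', hd1', rfl⟩ _ ⟨d2, hd2, d2', hd2', rfl⟩
    obtain ⟨d3, hd3, h31, h32⟩ := hdir d1 hd1 d2 hd2
    obtain ⟨d3', hd3', h31', h32'⟩ := hdir' d1' hd1' d2' hd2'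
    exact ⟨d3 + d3', Set.mem_image2_of_mem hd3 hd3',
      add_le_add h31 h31', add_le_add h32 h32'⟩
  · constructor
    · rintro _ ⟨d, hd, d', hd', rfl⟩
      exact add_nonneg (hglb.1 hd) (hglb'.1 hd')
    · intro b hb
      have h1 : ∀ d' ∈ D', b - d' ≤ 0 := by
        intro d' hd'
        refine hglb.2 ?_
        intro d hd
        exact sub_le_iff_le_add.2 (hb (Set.mem_image2_of_mem hd hd'))
      refine hglb'.2 ?_
      intro d' hd'
      exact sub_nonpos.1 (h1 d' hd')
  · rintro _ ⟨d, hd, d', hd', rfl⟩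
    obtain ⟨i₀, hi₀⟩ := hev d hd
    obtain ⟨i₁, hi₁⟩ := hev' d' hd'
    refine ⟨max i₀ i₁, fun i hi => ?_⟩
    have e1 : |y i - l| ≤ d := hi₀ i (le_trans (le_max_left _ _) hi)
    have e2 : |y' i - l'| ≤ d' := hi₁ i (le_trans (le_max_right _ _) hi)
    have h4 : y i + y' i - (l + l') = (y i - l) + (y' i - l') := by abel
    calc |y i + y' i - (l + l')| = |(y i - l) + (y' i - l')| := by rw [h4]
      _ ≤ |y i - l| + |y' i - l'| := abs_add_le _ _
      _ ≤ d + d' := add_le_add e1 e2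

lemma aux_smul_abs_le {c : ℝ} {z d : E} (h : |z| ≤ d) : |c • z| ≤ |c| • d := by
  have hz1 : z ≤ d := le_trans (le_abs_self z) h
  have hz2 : -z ≤ d := le_trans (neg_le_abs z) h
  rcases le_total 0 c with hc | hc
  · rw [abs_of_nonneg hc]
    refine abs_le'.2 ⟨?_, ?_⟩
    · exact smul_le_smul_of_nonneg_left hz1 hc
    · rw [← smul_neg]
      exact smul_le_smul_of_nonneg_left hz2 hc
  · rw [abs_of_nonpos hc]
    refine abs_le'.2 ⟨?_, ?_⟩
    · have h1 : c • z = (-c) • (-z) := by rw [neg_smul, smul_neg, neg_neg]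
      rw [h1]
      exact smul_le_smul_of_nonneg_left hz2 (neg_nonneg.2 hc)
    · rw [← neg_smul]
      exact smul_le_smul_of_nonneg_left hz1 (neg_nonneg.2 hc)

lemma aux_conv_smul {y : ℕ → E} {l : E} (c : ℝ) (h : OrderConvNet E y l) :
    OrderConvNet E (fun n => c • y n) (c • l) := by
  obtain ⟨D, hne, hdir, hglb, hev⟩ := h
  refine ⟨(fun d => |c| • d) '' D, hne.image _, ?_, ?_, ?_⟩
  · rintro _ ⟨d1, hd1, rfl⟩ _ ⟨d2, hd2, rfl⟩
    obtain ⟨d3, hd3, h31, h32⟩ := hdir d1 hd1 d2 hd2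
    exact ⟨|c| • d3, Set.mem_image_of_mem _ hd3,
      smul_le_smul_of_nonneg_left h31 (abs_nonneg c),
      smul_le_smul_of_nonneg_left h32 (abs_nonneg c)⟩
  · constructor
    · rintro _ ⟨d, hd, rfl⟩
      exact smul_nonneg (abs_nonneg c) (hglb.1 hd)
    · intro b hb
      by_cases hc : c = 0
      · have h1 : ∀ d ∈ D, b ≤ 0 • d := by
          intro d hd
          have := hb (Set.mem_image_of_mem _ hd)
          simpa [hc] using this
        obtain ⟨d, hd⟩ := hne
        simpa using h1 d hd
      · have hcpos : (0 : ℝ) < |c| := abs_pos.2 hc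
        have h1 : |c|⁻¹ • b ≤ 0 := by
          refine hglb.2 ?_
          intro d hd
          have h2 : b ≤ |c| • d := hb (Set.mem_image_of_mem _ hd)
          have h3 : |c|⁻¹ • b ≤ |c|⁻¹ • (|c| • d) :=
            smul_le_smul_of_nonneg_left h2 (inv_nonneg.2 (abs_nonneg c))
          rwa [smul_smul, inv_mul_cancel₀ hcpos.ne', one_smul] at h3
        have h4 : |c| • (|c|⁻¹ • b) ≤ |c| • (0 : E) :=
          smul_le_smul_of_nonneg_left h1 (abs_nonneg c)
        rwa [smul_smul, mul_inv_cancel₀ hcpos.ne', one_smul, smul_zero] at h4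
  · rintro _ ⟨d, hd, rfl⟩
    obtain ⟨i₀, hi₀⟩ := hev d hd
    refine ⟨i₀, fun i hi => ?_⟩
    have h1 : c • y i - c • l = c • (y i - l) := (smul_sub c _ _).symm
    rw [h1]
    exact aux_smul_abs_le (hi₀ i hi)

end AuxOrtho

/-- if `(T n)` is a sequence of orthomorphisms of a Dedekind complete vector
lattice such that `(T n x)` is order convergent for every `x`, then the pointwise order
limit defines an orthomorphism. -/
theorem stmt4
    (T : ℕ → E →ₗ[ℝ] E) (hT : ∀ n, IsOrthomorphism E (T n))
    (L : E → E) (hconv : ∀ x : E, OrderConvNet E (fun n => T n x) (L x)) :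
    ∃ L' : E →ₗ[ℝ] E, (∀ x : E, L' x = L x) ∧ IsOrthomorphism E L' := by
  have hadd : ∀ x z : E, L (x + z) = L x + L z := by
    intro x z
    have h1 : OrderConvNet E (fun n => T n x + T n z) (L x + L z) :=
      aux_conv_add (hconv x) (hconv z)
    have h2 : OrderConvNet E (fun n => T n (x + z)) (L x + L z) := by
      simpa [map_add] using h1
    exact aux_lim_unique (hconv (x + z)) h2
  have hsmul : ∀ (c : ℝ) (x : E), L (c • x) = c • L x := by
    intro c x
    have h1 : OrderConvNet E (fun n => T n (c • x)) (c • L x) := by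
      simpa [map_smul] using aux_conv_smul c (hconv x)
    exact aux_lim_unique (hconv (c • x)) h1
  refine ⟨⟨⟨L, fun x z => hadd x z⟩, fun c x => hsmul c x⟩, fun x => rfl, ?_, ?_⟩
  · -- order bounded
    intro a b
    set e : E := |a| ⊔ |b| with he_def
    obtain ⟨D, hne, hdir, hglb, hev⟩ := hconv e
    obtain ⟨d₀, hd₀⟩ := hne
    obtain ⟨i₀, hi₀⟩ := hev d₀ hd₀
    set U : E := (∑ k ∈ Finset.range i₀, |T k e|) + (|L e| + d₀) with hU
    have hbdd : ∀ n : ℕ, |T n e| ≤ U := by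
      intro n
      rcases Nat.lt_or_ge n i₀ with h | h
      · exact le_trans (aux_single_le_sum (f := fun k => |T k e|) i₀ (fun k _ => abs_nonneg _) h)
          (le_add_of_nonneg_right (add_nonneg (abs_nonneg (L e)) (hglb.1 hd₀)))
      · have h1 : |T n e - L e| ≤ d₀ := hi₀ n h
        have h3 : T n e = L e + (T n e - L e) := by abel
        have h2 : |T n e| ≤ |L e| + d₀ := by
          calc |T n e| = |L e + (T n e - L e)| := by rw [← h3]
            _ ≤ |L e| + |T n e - L e| := abs_add_le _ _
            _ ≤ |L e| + d₀ := add_le_add le_rfl h1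
        exact le_trans h2 (le_add_of_nonneg_left (aux_sum_nonneg i₀ fun k _ => abs_nonneg _))
    set S : E := sSup (Set.range fun n => |T n e|) with hS
    have hSbdd : BddAbove (Set.range fun n : ℕ => |T n e|) :=
      ⟨U, by rintro _ ⟨n, rfl⟩; exact hbdd n⟩
    have hle_S : ∀ n : ℕ, |T n e| ≤ S := fun n => le_csSup hSbdd ⟨n, rfl⟩
    refine ⟨-(S + S), S + S, ?_⟩
    intro x hax hxb
    have hxe : |x| ≤ e := by
      refine abs_le'.2 ⟨?_, ?_⟩
      · exact le_trans hxb (le_trans (le_abs_self b) le_sup_right)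
      · exact le_trans (by simpa using sub_le_sub_left hax (0 : E))
          (le_trans (neg_le_abs a) le_sup_left)
    have hTx : ∀ n, |T n x| ≤ S + S := fun n =>
      le_trans (aux_absStar (hT n).1 (hT n).2 hxe) (add_le_add (hle_S n) (hle_S n))
    obtain ⟨Dx, hnex, hdirx, hglbx, hevx⟩ := hconv x
    have hLx : |L x| - (S + S) ≤ 0 := by
      refine hglbx.2 ?_
      intro d hd
      obtain ⟨j₀, hj₀⟩ := hevx d hd
      have e1 : |T j₀ x - L x| ≤ d := hj₀ j₀ le_rfl
      have h3 : L x = T j₀ x + (L x - T j₀ x) := by abel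
      have h4 : |L x| ≤ (S + S) + d := by
        calc |L x| = |T j₀ x + (L x - T j₀ x)| := by rw [← h3]
          _ ≤ |T j₀ x| + |L x - T j₀ x| := abs_add_le _ _
          _ ≤ (S + S) + d := add_le_add (hTx j₀) (by rwa [abs_sub_comm] at e1)
      exact sub_le_iff_le_add'.2 h4
    have hLx' : |L x| ≤ S + S := sub_nonpos.1 hLx
    constructor
    · have h5 : -(L x) ≤ S + S := le_trans (neg_le_abs _) hLx'
      have h6 := sub_le_sub_left h5 0
      simpa using h6
    · exact le_trans (le_abs_self _) hLx'
  · -- band preserving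
    intro x z hxz
    show |L x| ⊓ |z| = 0
    have hTn : ∀ n, |T n x| ⊓ |z| = 0 := fun n => (hT n).2 x z hxz
    obtain ⟨Dx, hnex, hdirx, hglbx, hevx⟩ := hconv x
    have hle : |L x| ⊓ |z| ≤ 0 := by
      refine hglbx.2 ?_
      intro d hd
      obtain ⟨j₀, hj₀⟩ := hevx d hd
      have e1 : |L x - T j₀ x| ≤ d := by
        rw [abs_sub_comm]
        exact hj₀ j₀ le_rfl
      have hd0 : (0 : E) ≤ d := hglbx.1 hd
      have h3 : L x = T j₀ x + (L x - T j₀ x) := by abel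
      have h1 : |L x| ≤ |T j₀ x| + d := by
        calc |L x| = |T j₀ x + (L x - T j₀ x)| := by rw [← h3]
          _ ≤ |T j₀ x| + |L x - T j₀ x| := abs_add_le _ _
          _ ≤ |T j₀ x| + d := add_le_add le_rfl e1
      calc |L x| ⊓ |z| ≤ (|T j₀ x| + d) ⊓ |z| := inf_le_inf_right _ h1
        _ = |z| ⊓ (|T j₀ x| + d) := inf_comm ..
        _ ≤ |z| ⊓ |T j₀ x| + |z| ⊓ d := aux_inf_add_le (abs_nonneg z) (abs_nonneg _) hd0
        _ ≤ 0 + d := by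
            refine add_le_add ?_ inf_le_right
            rw [inf_comm]
            exact (hTn j₀).le
        _ = d := zero_add d
    exact le_antisymm hle (le_inf (abs_nonneg _) (abs_nonneg _))
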